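/- Let λ ∈ ℂ with |λ| < 1, let m ∈ ℕ, and let (α_{m,k})_{k≥0} be the Taylor coefficients at 0 of the function z ↦ ((z+λ)/(1+conj(λ)z))^m, which is analytic on the disk |z| < 1/|λ| (interpreted as all of ℂ if λ = 0). Then for every a > 0, the sum ∑_{k=0}^∞ |α_{m,k}|² e^{-2ak} ≤ M^m, where M = (|λ| + e^{-2a})/(1 + e^{-2a}|λ|). -/

import Mathlib

open Complex MeasureTheory intervalIntegral Real

noncomputable def EE (j : ℤ) (x : ℝ) : ℂ := Complex.exp (2 * Real.pi * Complex.I * j * x)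

lemma EE_cont (j : ℤ) : Continuous (EE j) := by
  unfold EE; fun_prop

lemma EE_abs (j : ℤ) (x : ℝ) : ‖EE j x‖ = 1 := by
  rw [EE, show ((2:ℂ) * Real.pi * Complex.I * j * x) = ((2 * Real.pi * j * x : ℝ) : ℂ) * Complex.I by push_cast; ring, Complex.norm_exp_ofReal_mul_I]

lemma EE_mul (j k : ℤ) (x : ℝ) : EE j x * EE k x = EE (j + k) x := by
  rw [EE, EE, EE, ← Complex.exp_add]; congr 1; push_cast; ring

lemma EE_conj (j : ℤ) (x : ℝ) : (starRingEnd ℂ) (EE j x) = EE (-j) x := by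
  rw [EE, EE, ← Complex.exp_conj]; congr 1
  simp only [map_mul, Complex.conj_I, map_ofNat, Complex.conj_ofReal, map_intCast]
  push_cast; ring

lemma EE_pow (k : ℕ) (x : ℝ) : (EE 1 x) ^ k = EE k x := by
  rw [EE, EE, ← Complex.exp_nat_mul]; congr 1; push_cast; ring

lemma EE_int (j : ℤ) : ∫ x in (0:ℝ)..1, EE j x = if j = 0 then 1 else 0 := by
  rcases eq_or_ne j 0 with h | h
  · simp [EE, h]
  · have hc : (2 * (Real.pi:ℂ) * Complex.I * j) ≠ 0 := by
      simp [Real.pi_ne_zero, Complex.I_ne_zero, h]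
    rw [show (fun x : ℝ => EE j x) = fun x : ℝ => Complex.exp ((2 * (Real.pi:ℂ) * Complex.I * j) * x) from funext fun x => by rw [EE],
      integral_exp_mul_complex hc]
    rw [show (2 * (Real.pi:ℂ) * Complex.I * j) * (1:ℝ) = j * (2 * Real.pi * Complex.I) by push_cast; ring]
    rw [Complex.exp_int_mul_two_pi_mul_I]
    simp [h]

lemma intervalIntegral_conj {f : ℝ → ℂ} {a b : ℝ} :
    ∫ x in a..b, (starRingEnd ℂ) (f x) = (starRingEnd ℂ) (∫ x in a..b, f x) := by
  rw [intervalIntegral, intervalIntegral, integral_conj, integral_conj, map_sub]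

lemma mob_sq {t r : ℝ} (ht0 : 0 ≤ t) (ht1 : t < 1) (hr0 : 0 < r) (hr1 : r < 1) :
    ((t + r) / (1 + t * r)) ^ 2 ≤ (t + r ^ 2) / (1 + r ^ 2 * t) := by
  have h1 : 0 < 1 + t * r := by nlinarith
  have h2 : 0 < 1 + r ^ 2 * t := by nlinarith
  rw [div_pow, div_le_div_iff₀ (by positivity) h2]
  nlinarith [mul_nonneg (mul_nonneg (mul_nonneg ht0 (sub_nonneg.2 ht1.le)) (sq_nonneg (1 - r))) (by nlinarith : (0:ℝ) ≤ 1 - r ^ 2)]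

theorem stmt_6 (l : ℂ) (hl : ‖l‖ < 1) (m : ℕ) (α : ℕ → ℂ)
    (hα : ∀ z : ℂ, ‖z‖ < 1 →
      HasSum (fun k : ℕ => α k * z ^ k) (((z + l) / (1 + (starRingEnd ℂ) l * z)) ^ m))
    (a : ℝ) (ha : 0 < a) :
    ∑' k : ℕ, (‖α k‖) ^ 2 * Real.exp (-2 * a * k) ≤
      ((‖l‖ + Real.exp (-2 * a)) / (1 + Real.exp (-2 * a) * ‖l‖)) ^ m := by
  set t := ‖l‖ with ht_def
  have ht0 : 0 ≤ t := norm_nonneg l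
  set r := Real.exp (-a) with hr_def
  have hr0 : 0 < r := Real.exp_pos _
  have hr1 : r < 1 := Real.exp_lt_one_iff.2 (by linarith)
  set c : ℕ → ℂ := fun k => α k * (r : ℂ) ^ k with hc_def
  have habs_c : ∀ k, ‖c k‖ = ‖α k‖ * r ^ k := by
    intro k
    simp [hc_def, norm_mul, norm_pow, Complex.norm_real, Real.norm_eq_abs, abs_of_pos hr0]
  -- summability
  set ρ : ℝ := (1 + r) / 2 with hρ_def
  have hρr : r < ρ := by rw [hρ_def]; linarith
  have hρ1 : ρ < 1 := by rw [hρ_def]; linarith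
  have hρ0 : 0 < ρ := by rw [hρ_def]; linarith
  have hsumρ := (hα (ρ : ℂ) (by rw [Complex.norm_real, Real.norm_eq_abs, abs_of_pos hρ0]; exact hρ1)).summable
  have htend : Filter.Tendsto (fun k => ‖α k * (ρ:ℂ) ^ k‖) Filter.atTop (nhds 0) := by
    simpa using hsumρ.tendsto_atTop_zero.norm
  obtain ⟨C, hC⟩ := htend.bddAbove_range
  have hCk : ∀ k, ‖α k‖ * ρ ^ k ≤ C := by
    intro k
    have := hC (Set.mem_range_self (f := fun k => ‖α k * (ρ:ℂ) ^ k‖) k)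
    simpa [norm_mul, norm_pow, Complex.norm_real, Real.norm_eq_abs, abs_of_pos hρ0] using this
  have hC0 : 0 ≤ C := le_trans (by positivity) (hCk 0)
  have hck_le : ∀ k, ‖c k‖ ≤ C * (r / ρ) ^ k := by
    intro k
    rw [habs_c]
    have hne : (ρ:ℝ) ^ k ≠ 0 := by positivity
    have : ‖α k‖ * r ^ k = (‖α k‖ * ρ ^ k) * (r / ρ) ^ k := by
      have h2 : ρ * (r / ρ) = r := by
        rw [mul_comm, div_mul_cancel₀ _ (ne_of_gt hρ0)]
      rw [mul_assoc, ← mul_pow, h2]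
    rw [this]
    exact mul_le_mul_of_nonneg_right (hCk k) (by positivity)
  have hgeo : Summable fun k : ℕ => C * (r / ρ) ^ k :=
    (summable_geometric_of_lt_one (by positivity) (by rw [div_lt_one hρ0]; exact hρr)).mul_left C
  have hsum_c : Summable fun k => ‖c k‖ :=
    Summable.of_nonneg_of_le (fun k => norm_nonneg _) hck_le hgeo
  have hcC : ∀ k, ‖c k‖ ≤ C := by
    intro k
    refine (hck_le k).trans ?_
    have : (r / ρ) ^ k ≤ 1 := pow_le_one₀ (by positivity) (by rw [div_le_one hρ0]; exact hρr.le)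
    nlinarith
  have hsum_c2 : Summable fun k => ‖c k‖ ^ 2 := by
    refine Summable.of_nonneg_of_le (fun k => sq_nonneg _) (fun k => ?_) (hsum_c.mul_left C)
    rw [sq]
    exact mul_le_mul_of_nonneg_right (hcC k) (norm_nonneg _)
  -- the boundary function
  set z : ℝ → ℂ := fun x => (r : ℂ) * EE 1 x with hz_def
  have hz_abs : ∀ x, ‖z x‖ = r := by
    intro x
    simp [hz_def, norm_mul, EE_abs, Complex.norm_real, Real.norm_eq_abs, abs_of_pos hr0]
  set F : ℝ → ℂ := fun x => ((z x + l) / (1 + (starRingEnd ℂ) l * z x)) ^ m with hF_def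
  have hden_abs : ∀ x, ‖(starRingEnd ℂ) l * z x‖ = t * r := by
    intro x
    rw [norm_mul, hz_abs, Complex.norm_conj]
  have hden : ∀ x, (1 + (starRingEnd ℂ) l * z x) ≠ 0 := by
    intro x h
    have hw : (starRingEnd ℂ) l * z x = -1 := by linear_combination h
    have := hden_abs x
    rw [hw] at this
    simp at this
    nlinarith
  have hcz : Continuous z := continuous_const.mul (EE_cont 1)
  have hcontF : Continuous F := by
    exact ((hcz.add continuous_const).div (continuous_const.add (continuous_const.mul hcz)) hden).pow m
  have hFx : ∀ x, HasSum (fun k => c k * EE k x) (F x) := by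
    intro x
    have h := hα (z x) (by rw [hz_abs]; exact hr1)
    have e : ∀ k : ℕ, α k * (z x) ^ k = c k * EE k x := by
      intro k
      rw [hz_def, hc_def]
      simp only
      rw [mul_pow, EE_pow]
      ring
    simpa [funext e] using h
  -- coefficient formula
  have hcoef : ∀ n : ℕ, (∫ x in (0:ℝ)..1, F x * (starRingEnd ℂ) (EE n x)) = c n := by
    intro n
    have hHS : HasSum (fun k : ℕ => ∫ x in (0:ℝ)..1, c k * EE ((k:ℤ) - n) x)
        (∫ x in (0:ℝ)..1, F x * (starRingEnd ℂ) (EE n x)) := by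
      apply intervalIntegral.hasSum_integral_of_dominated_convergence
        (bound := fun k (_ : ℝ) => ‖c k‖)
      · exact fun k => (continuous_const.mul (EE_cont _)).aestronglyMeasurable
      · intro k
        filter_upwards with x _
        simp [norm_mul, EE_abs]
      · filter_upwards with x _
        exact hsum_c
      · exact intervalIntegrable_const
      · filter_upwards with x _
        have h := (hFx x).mul_right ((starRingEnd ℂ) (EE n x))
        have e : ∀ k : ℕ, c k * EE k x * (starRingEnd ℂ) (EE n x) = c k * EE ((k:ℤ) - n) x := by
          intro k
          rw [mul_assoc, EE_conj, EE_mul, sub_eq_add_neg]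
        simpa only [funext e] using h
    have e2 : ∀ k : ℕ, (∫ x in (0:ℝ)..1, c k * EE ((k:ℤ) - n) x) = if k = n then c n else 0 := by
      intro k
      rw [intervalIntegral.integral_const_mul, EE_int]
      rcases eq_or_ne k n with h | h
      · subst h; simp
      · have hne : ((k:ℤ) - n) ≠ 0 := sub_ne_zero.2 (by exact_mod_cast h)
        simp [hne, h]
    simp only [e2] at hHS
    exact hHS.unique (hasSum_ite_eq n (c n))
  -- pointwise modulus bound
  have hden_pos : 0 < 1 + t * r := by nlinarith
  have hq0 : (0:ℝ) ≤ (t + r) / (1 + t * r) := by positivity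
  have hw : ∀ x : ℝ, ‖(z x + l) / (1 + (starRingEnd ℂ) l * z x)‖ ≤ (t + r) / (1 + t * r) := by
    intro x
    have habsden_pos : 0 < ‖1 + (starRingEnd ℂ) l * z x‖ := norm_pos_iff.mpr (hden x)
    rw [norm_div, div_le_div_iff₀ habsden_pos hden_pos]
    have h1 : Complex.normSq (z x + l) = r ^ 2 + 2 * ((starRingEnd ℂ) l * z x).re + t ^ 2 := by
      rw [Complex.normSq_add, Complex.normSq_eq_norm_sq, Complex.normSq_eq_norm_sq, hz_abs,
        mul_comm (z x) ((starRingEnd ℂ) l)]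
      ring
    have h2 : Complex.normSq (1 + (starRingEnd ℂ) l * z x)
        = 1 + 2 * ((starRingEnd ℂ) l * z x).re + t ^ 2 * r ^ 2 := by
      have hzz : Complex.normSq (z x) = r ^ 2 := by rw [Complex.normSq_eq_norm_sq, hz_abs]
      rw [Complex.normSq_add, Complex.normSq_mul, Complex.normSq_conj, hzz, one_mul,
        Complex.conj_re, Complex.normSq_one, Complex.normSq_eq_norm_sq, ← ht_def]
      ring
    have hu : |((starRingEnd ℂ) l * z x).re| ≤ t * r := by
      rw [← hden_abs x]; exact Complex.abs_re_le_norm _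
    obtain ⟨hu1, hu2⟩ := abs_le.1 hu
    have key : (‖z x + l‖) ^ 2 * (1 + t * r) ^ 2
        ≤ (t + r) ^ 2 * (‖1 + (starRingEnd ℂ) l * z x‖) ^ 2 := by
      rw [Complex.sq_norm, Complex.sq_norm, h1, h2]
      nlinarith [mul_nonneg (mul_nonneg (sub_nonneg.2 hu2)
        (by nlinarith : (0:ℝ) ≤ 1 - t ^ 2)) (by nlinarith : (0:ℝ) ≤ 1 - r ^ 2)]
    have hA : (0:ℝ) ≤ ‖z x + l‖ * (1 + t * r) :=
      mul_nonneg (norm_nonneg _) hden_pos.le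
    have hB : (0:ℝ) ≤ (t + r) * ‖1 + (starRingEnd ℂ) l * z x‖ :=
      mul_nonneg (by positivity) (norm_nonneg _)
    refine (pow_le_pow_iff_left₀ hA hB two_ne_zero).mp ?_
    rw [mul_pow, mul_pow]
    exact key
  have hFle : ∀ x : ℝ, ‖F x‖ ≤ ((t + r) / (1 + t * r)) ^ m := by
    intro x
    rw [hF_def]
    simp only [norm_pow]
    exact pow_le_pow_left₀ (norm_nonneg _) (hw x) m
  have hIF : (∫ x in (0:ℝ)..1, Complex.normSq (F x)) ≤ (((t + r) / (1 + t * r)) ^ m) ^ 2 := by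
    have hint : IntervalIntegrable (fun x => Complex.normSq (F x)) volume 0 1 :=
      (Complex.continuous_normSq.comp hcontF).intervalIntegrable 0 1
    have hmono : (∫ x in (0:ℝ)..1, Complex.normSq (F x))
        ≤ ∫ _x in (0:ℝ)..1, (((t + r) / (1 + t * r)) ^ m) ^ 2 := by
      apply intervalIntegral.integral_mono_on (by norm_num) hint intervalIntegrable_const
      intro x _
      rw [← Complex.sq_norm]
      exact pow_le_pow_left₀ (norm_nonneg _) (hFle x) 2
    simpa using hmono
  -- Bessel inequality
  have hcc : ∀ f g : ℝ → ℂ, Continuous f → Continuous g →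
      IntervalIntegrable (fun x => f x * (starRingEnd ℂ) (g x)) volume 0 1 := by
    intro f g hf hg
    have hcg : Continuous fun x => (starRingEnd ℂ) (g x) := by
      simpa only [starRingEnd_apply, Function.comp_def] using (continuous_star.comp hg)
    exact (hf.mul hcg).intervalIntegrable 0 1
  have int_sum : ∀ (f : ℕ → ℝ → ℂ) (S : Finset ℕ), (∀ k ∈ S, IntervalIntegrable (f k) volume 0 1) →
      (∫ x in (0:ℝ)..1, ∑ k ∈ S, f k x) = ∑ k ∈ S, ∫ x in (0:ℝ)..1, f k x :=
    fun f S h => intervalIntegral.integral_finset_sum h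
  have hbes : ∀ S : Finset ℕ, (∑ k ∈ S, ‖c k‖ ^ 2)
      ≤ ∫ x in (0:ℝ)..1, Complex.normSq (F x) := by
    intro S
    set P : ℝ → ℂ := fun x => ∑ k ∈ S, c k * EE k x with hP_def
    have hcontP : Continuous P := continuous_finset_sum _ fun k _ => continuous_const.mul (EE_cont _)
    have hconjsum : ((∑ k ∈ S, ‖c k‖ ^ 2 : ℝ) : ℂ)
        = ∑ k ∈ S, (starRingEnd ℂ) (c k) * c k := by
      push_cast
      refine Finset.sum_congr rfl fun k _ => ?_
      rw [mul_comm, Complex.mul_conj, Complex.normSq_eq_norm_sq]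
      norm_cast
    have hI2 : (∫ x in (0:ℝ)..1, F x * (starRingEnd ℂ) (P x))
        = ((∑ k ∈ S, ‖c k‖ ^ 2 : ℝ) : ℂ) := by
      have e : ∀ x, F x * (starRingEnd ℂ) (P x)
          = ∑ k ∈ S, (starRingEnd ℂ) (c k) * (F x * (starRingEnd ℂ) (EE k x)) := by
        intro x
        rw [hP_def]
        simp only [map_sum, map_mul, Finset.mul_sum]
        exact Finset.sum_congr rfl fun k _ => by ring
      simp only [e]
      rw [int_sum (fun k x => (starRingEnd ℂ) (c k) * (F x * (starRingEnd ℂ) (EE k x))) S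
        (fun k _ => (hcc F (EE k) hcontF (EE_cont k)).const_mul _)]
      simp only [intervalIntegral.integral_const_mul, hcoef]
      rw [hconjsum]
    have hI3 : (∫ x in (0:ℝ)..1, P x * (starRingEnd ℂ) (F x))
        = ((∑ k ∈ S, ‖c k‖ ^ 2 : ℝ) : ℂ) := by
      have e : ∀ x, P x * (starRingEnd ℂ) (F x)
          = (starRingEnd ℂ) (F x * (starRingEnd ℂ) (P x)) := by
        intro x
        rw [map_mul, Complex.conj_conj]
        ring
      simp only [e]
      rw [_root_.intervalIntegral_conj, hI2, Complex.conj_ofReal]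
    have hI4 : (∫ x in (0:ℝ)..1, P x * (starRingEnd ℂ) (P x))
        = ((∑ k ∈ S, ‖c k‖ ^ 2 : ℝ) : ℂ) := by
      have e : ∀ x, P x * (starRingEnd ℂ) (P x)
          = ∑ j ∈ S, ∑ k ∈ S, (c j * (starRingEnd ℂ) (c k)) * EE ((j:ℤ) - k) x := by
        intro x
        rw [hP_def]
        simp only [map_sum, map_mul, Finset.sum_mul_sum]
        refine Finset.sum_congr rfl fun j _ => Finset.sum_congr rfl fun k _ => ?_
        rw [EE_conj, sub_eq_add_neg, ← EE_mul]
        ring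
      simp only [e]
      rw [int_sum (fun j x => ∑ k ∈ S, (c j * (starRingEnd ℂ) (c k)) * EE ((j:ℤ) - k) x) S
        (fun j _ => (continuous_finset_sum _ fun k _ =>
          continuous_const.mul (EE_cont _)).intervalIntegrable 0 1)]
      have intg : ∀ j ∈ S, (∫ x in (0:ℝ)..1, ∑ k ∈ S, (c j * (starRingEnd ℂ) (c k)) * EE ((j:ℤ) - k) x)
          = c j * (starRingEnd ℂ) (c j) := by
        intro j hj
        rw [show (∫ x in (0:ℝ)..1, ∑ k ∈ S, (c j * (starRingEnd ℂ) (c k)) * EE ((j:ℤ) - k) x)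
            = ∑ k ∈ S, ∫ x in (0:ℝ)..1, (c j * (starRingEnd ℂ) (c k)) * EE ((j:ℤ) - k) x from
          int_sum (fun k x => (c j * (starRingEnd ℂ) (c k)) * EE ((j:ℤ) - k) x) S
            (fun k _ => (continuous_const.mul (EE_cont _)).intervalIntegrable 0 1)]
        have e3 : ∀ k ∈ S, (∫ x in (0:ℝ)..1, (c j * (starRingEnd ℂ) (c k)) * EE ((j:ℤ) - k) x)
            = if k = j then c j * (starRingEnd ℂ) (c j) else 0 := by
          intro k _
          rw [intervalIntegral.integral_const_mul, EE_int]
          rcases eq_or_ne k j with h | h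
          · subst h; simp
          · have hne : ((j:ℤ) - k) ≠ 0 := sub_ne_zero.2 (by exact_mod_cast (Ne.symm h))
            simp [hne, h]
        rw [Finset.sum_congr rfl e3, Finset.sum_ite_eq' S j, if_pos hj]
      rw [Finset.sum_congr rfl intg, hconjsum]
      exact Finset.sum_congr rfl fun k _ => mul_comm _ _
    have hI1 : (∫ x in (0:ℝ)..1, F x * (starRingEnd ℂ) (F x))
        = ((∫ x in (0:ℝ)..1, Complex.normSq (F x) : ℝ) : ℂ) := by
      simp only [Complex.mul_conj]
      exact intervalIntegral.integral_ofReal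
    have hJ : (∫ x in (0:ℝ)..1, (F x - P x) * (starRingEnd ℂ) (F x - P x))
        = ((∫ x in (0:ℝ)..1, Complex.normSq (F x - P x) : ℝ) : ℂ) := by
      simp only [Complex.mul_conj]
      exact intervalIntegral.integral_ofReal
    have i11 := hcc F F hcontF hcontF
    have i12 := hcc F P hcontF hcontP
    have i21 := hcc P F hcontP hcontF
    have i22 := hcc P P hcontP hcontP
    have hexp : (∫ x in (0:ℝ)..1, (F x - P x) * (starRingEnd ℂ) (F x - P x))
        = ((∫ x in (0:ℝ)..1, Complex.normSq (F x) : ℝ) : ℂ)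
          - ((∑ k ∈ S, ‖c k‖ ^ 2 : ℝ) : ℂ) := by
      have e : ∀ x, (F x - P x) * (starRingEnd ℂ) (F x - P x)
          = (F x * (starRingEnd ℂ) (F x) - F x * (starRingEnd ℂ) (P x))
            - (P x * (starRingEnd ℂ) (F x) - P x * (starRingEnd ℂ) (P x)) := by
        intro x
        rw [map_sub]
        ring
      simp only [e]
      rw [intervalIntegral.integral_sub (i11.sub i12) (i21.sub i22),
        intervalIntegral.integral_sub i11 i12, intervalIntegral.integral_sub i21 i22,
        hI1, hI2, hI3, hI4]
      ring
    have hreal : (∫ x in (0:ℝ)..1, Complex.normSq (F x - P x))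
        = (∫ x in (0:ℝ)..1, Complex.normSq (F x)) - ∑ k ∈ S, ‖c k‖ ^ 2 := by
      have h := hJ.symm.trans hexp
      rw [← Complex.ofReal_sub] at h
      exact_mod_cast h
    have hJ0 : 0 ≤ ∫ x in (0:ℝ)..1, Complex.normSq (F x - P x) :=
      intervalIntegral.integral_nonneg (by norm_num) fun x _ => Complex.normSq_nonneg _
    linarith
  -- conclusion
  have htsum_le : (∑' k, ‖c k‖ ^ 2) ≤ (((t + r) / (1 + t * r)) ^ m) ^ 2 :=
    Summable.tsum_le_of_sum_le hsum_c2 fun S => (hbes S).trans hIF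
  have hLHS : (∑' k : ℕ, ‖α k‖ ^ 2 * Real.exp (-2 * a * k))
      = ∑' k, ‖c k‖ ^ 2 := by
    refine tsum_congr fun k => ?_
    rw [habs_c, mul_pow]
    congr 1
    show Real.exp (-2 * a * k) = (Real.exp (-a) ^ k) ^ 2
    rw [← Real.exp_nat_mul, ← Real.exp_nat_mul]
    congr 1
    push_cast
    ring
  have hexp2 : Real.exp (-2 * a) = r ^ 2 := by
    show Real.exp (-2 * a) = Real.exp (-a) ^ 2
    rw [← Real.exp_nat_mul]
    congr 1
    push_cast
    ring
  rw [hLHS, hexp2]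
  calc (∑' k, ‖c k‖ ^ 2) ≤ (((t + r) / (1 + t * r)) ^ m) ^ 2 := htsum_le
    _ = (((t + r) / (1 + t * r)) ^ 2) ^ m := by rw [← pow_mul, ← pow_mul, Nat.mul_comm]
    _ ≤ ((t + r ^ 2) / (1 + r ^ 2 * t)) ^ m :=
        pow_le_pow_left₀ (sq_nonneg _) (mob_sq ht0 hl hr0 hr1) m
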